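/- For all m, n ∈ ℕ and all X ≥ 0, the Laguerre polynomials satisfy the convolution identity ∫_0^X L_m(t) L_n(X − t) dt = L_{m+n}(X) − L_{m+n+1}(X). -/

import Mathlib

open MeasureTheory

noncomputable section

open intervalIntegral Finset

/-- The `n`-th Laguerre polynomial `L_n(x) = Σ_{k=0}^n (n choose k) (−x)^k / k!`. -/
def laguerreFun (n : ℕ) (x : ℝ) : ℝ :=
  ∑ k ∈ Finset.range (n + 1), (n.choose k : ℝ) * (-x) ^ k / (k.factorial : ℝ)


lemma beta_nat (k : ℕ) : ∀ j : ℕ, ∫ x in (0:ℝ)..1, x ^ j * (1 - x) ^ k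
    = (j.factorial * k.factorial : ℝ) / ((j + k + 1).factorial : ℝ) := by
  induction k with
  | zero =>
    intro j
    have hf : (j.factorial:ℝ) ≠ 0 := by exact_mod_cast Nat.factorial_ne_zero j
    have hj : ((j:ℝ)+1) ≠ 0 := by positivity
    simp only [pow_zero, mul_one, Nat.add_zero]
    rw [integral_pow, Nat.factorial_succ]
    push_cast
    norm_num
    field_simp
  | succ k ih =>
    intro j
    have hj : ((j:ℝ)+1) ≠ 0 := by positivity
    have hu : ∀ x ∈ Set.uIcc (0:ℝ) 1, HasDerivAt (fun x : ℝ => (1 - x) ^ (k+1))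
        (-(((k:ℝ)+1) * (1 - x) ^ k)) x := by
      intro x _
      have h := ((hasDerivAt_id x).const_sub 1).pow (k+1)
      simp only [id_eq] at h
      refine h.congr_deriv ?_
      rw [Nat.add_sub_cancel]
      push_cast
      ring
    have hv : ∀ x ∈ Set.uIcc (0:ℝ) 1, HasDerivAt (fun x : ℝ => x ^ (j+1) / ((j:ℝ)+1))
        (x ^ j) x := by
      intro x _
      have h := (hasDerivAt_pow (j+1) x).div_const ((j:ℝ)+1)
      refine h.congr_deriv ?_
      rw [Nat.add_sub_cancel]
      push_cast
      field_simp
    have hiu : IntervalIntegrable (fun x : ℝ => -(((k:ℝ)+1) * (1 - x) ^ k)) volume 0 1 := by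
      apply Continuous.intervalIntegrable; continuity
    have hiv : IntervalIntegrable (fun x : ℝ => x ^ j) volume 0 1 := by
      apply Continuous.intervalIntegrable; continuity
    have H := integral_mul_deriv_eq_deriv_mul hu hv hiu hiv
    have e : (∫ x in (0:ℝ)..1, -(((k:ℝ)+1) * (1 - x) ^ k) * (x ^ (j+1) / ((j:ℝ)+1)))
        = -((((k:ℝ)+1)/((j:ℝ)+1)) * ∫ x in (0:ℝ)..1, x ^ (j+1) * (1 - x) ^ k) := by
      rw [← intervalIntegral.integral_const_mul, ← intervalIntegral.integral_neg]
      congr 1; ext x; ring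
    have h3 : (∫ x in (0:ℝ)..1, x ^ j * (1 - x) ^ (k+1))
        = (∫ x in (0:ℝ)..1, (1 - x) ^ (k+1) * x ^ j) := by
      congr 1; ext x; ring
    rw [h3, H, e, ih (j+1)]
    have e1 : (j + 1 + k + 1) = (j + (k+1) + 1) := by ring
    rw [e1]
    have hfac : ((j + (k+1) + 1).factorial : ℝ) ≠ 0 := by
      exact_mod_cast Nat.factorial_ne_zero _
    rw [Nat.factorial_succ j, Nat.factorial_succ k]
    push_cast
    norm_num
    field_simp

lemma beta_scaled (j k : ℕ) (X : ℝ) (hX : 0 ≤ X) :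
    ∫ t in (0:ℝ)..X, t ^ j * (X - t) ^ k
      = X ^ (j + k + 1) * ((j.factorial * k.factorial : ℝ) / ((j + k + 1).factorial : ℝ)) := by
  rcases eq_or_lt_of_le hX with h0 | h0
  · simp [← h0]
  · have hc : X ≠ 0 := ne_of_gt h0
    have key : (∫ u in (0:ℝ)..1, (X * u) ^ j * (X - X * u) ^ k)
        = X⁻¹ • ∫ t in (0:ℝ)..X, t ^ j * (X - t) ^ k := by
      have := integral_comp_mul_left (fun t => t ^ j * (X - t) ^ k) hc (a := 0) (b := 1)
      simpa using this
    have lhs_eq : (∫ u in (0:ℝ)..1, (X * u) ^ j * (X - X * u) ^ k)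
        = X ^ (j + k) * ∫ u in (0:ℝ)..1, u ^ j * (1 - u) ^ k := by
      rw [← intervalIntegral.integral_const_mul]
      congr 1; ext u
      have : X - X * u = X * (1 - u) := by ring
      rw [this, mul_pow, mul_pow]
      ring
    rw [lhs_eq, beta_nat k j] at key
    have := key.symm
    rw [smul_eq_mul] at this
    field_simp at this
    have hfac : ((j + k + 1).factorial : ℝ) ≠ 0 := by
      exact_mod_cast Nat.factorial_ne_zero _
    rw [pow_succ]
    field_simp
    linarith [this]

/-- The term function. -/
def lagG (m n : ℕ) (X : ℝ) (j k : ℕ) : ℝ :=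
  (m.choose j : ℝ) * (n.choose k : ℝ) * ((-1) ^ (j + k) * X ^ (j + k + 1)
    / ((j + k + 1).factorial : ℝ))

lemma lagG_left (m n : ℕ) (X : ℝ) {j : ℕ} (k : ℕ) (h : m < j) : lagG m n X j k = 0 := by
  simp [lagG, Nat.choose_eq_zero_of_lt h]

lemma lagG_right (m n : ℕ) (X : ℝ) (j : ℕ) {k : ℕ} (h : n < k) : lagG m n X j k = 0 := by
  simp [lagG, Nat.choose_eq_zero_of_lt h]

lemma lag_step1 (m n : ℕ) (X : ℝ) (hX : 0 ≤ X) :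
    (∫ t in (0 : ℝ)..X, laguerreFun m t * laguerreFun n (X - t))
      = ∑ j ∈ range (m + 1), ∑ k ∈ range (n + 1), lagG m n X j k := by
  have expand : (fun t => laguerreFun m t * laguerreFun n (X - t))
      = fun t => ∑ j ∈ range (m + 1), ∑ k ∈ range (n + 1),
          ((m.choose j : ℝ) * (-t) ^ j / (j.factorial : ℝ)) *
          ((n.choose k : ℝ) * (-(X - t)) ^ k / (k.factorial : ℝ)) := by
    funext t
    rw [laguerreFun, laguerreFun, Finset.sum_mul_sum]
  rw [expand]
  rw [intervalIntegral.integral_finset_sum]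
  swap
  · intro j _
    apply Continuous.intervalIntegrable
    continuity
  refine Finset.sum_congr rfl fun j _ => ?_
  rw [intervalIntegral.integral_finset_sum]
  swap
  · intro k _
    apply Continuous.intervalIntegrable
    continuity
  refine Finset.sum_congr rfl fun k _ => ?_
  have hfj : (j.factorial : ℝ) ≠ 0 := by exact_mod_cast Nat.factorial_ne_zero j
  have hfk : (k.factorial : ℝ) ≠ 0 := by exact_mod_cast Nat.factorial_ne_zero k
  have hfjk : ((j + k + 1).factorial : ℝ) ≠ 0 := by
    exact_mod_cast Nat.factorial_ne_zero _
  calc (∫ t in (0:ℝ)..X, ((m.choose j : ℝ) * (-t) ^ j / (j.factorial : ℝ)) *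
          ((n.choose k : ℝ) * (-(X - t)) ^ k / (k.factorial : ℝ)))
      = ∫ t in (0:ℝ)..X, ((m.choose j : ℝ) * (n.choose k : ℝ) * (-1) ^ (j + k)
          / ((j.factorial : ℝ) * (k.factorial : ℝ))) * (t ^ j * (X - t) ^ k) := by
        congr 1
        funext t
        rw [neg_pow t, neg_pow (X - t)]
        ring
    _ = ((m.choose j : ℝ) * (n.choose k : ℝ) * (-1) ^ (j + k)
          / ((j.factorial : ℝ) * (k.factorial : ℝ))) *
          ∫ t in (0:ℝ)..X, t ^ j * (X - t) ^ k := integral_const_mul _ _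
    _ = lagG m n X j k := by
        rw [beta_scaled j k X hX, lagG]
        field_simp

lemma lag_step2 (m n : ℕ) (X : ℝ) :
    laguerreFun (m + n) X - laguerreFun (m + n + 1) X
      = ∑ s ∈ range (m + n + 1), ((m + n).choose s : ℝ) *
          ((-1) ^ s * X ^ (s + 1) / ((s + 1).factorial : ℝ)) := by
  set N := m + n with hN
  have hL1 : laguerreFun N X = ∑ k ∈ range (N + 2),
      (N.choose k : ℝ) * (-X) ^ k / (k.factorial : ℝ) := by
    rw [laguerreFun, Finset.sum_range_succ (n := N + 1)]
    simp [Nat.choose_succ_self]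
  rw [hL1, laguerreFun]
  rw [show N + 1 + 1 = N + 2 from rfl, ← Finset.sum_sub_distrib]
  rw [Finset.sum_range_succ' (fun k =>
    (N.choose k : ℝ) * (-X) ^ k / (k.factorial : ℝ) -
    ((N+1).choose k : ℝ) * (-X) ^ k / (k.factorial : ℝ)) (N + 1)]
  simp only [Nat.choose_zero_right, pow_zero, Nat.factorial_zero, Nat.cast_one, mul_one,
    sub_self, add_zero]
  refine Finset.sum_congr rfl fun s _ => ?_
  have hpascal : ((N + 1).choose (s + 1) : ℝ) = (N.choose s : ℝ) + (N.choose (s + 1) : ℝ) := by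
    rw [Nat.choose_succ_succ]
    push_cast
    ring
  have hfs : ((s + 1).factorial : ℝ) ≠ 0 := by exact_mod_cast Nat.factorial_ne_zero _
  rw [hpascal, pow_succ, neg_pow X]
  field_simp
  ring

lemma lag_vandermonde (m n : ℕ) (X : ℝ) (s : ℕ) :
    ((m + n).choose s : ℝ) * ((-1) ^ s * X ^ (s + 1) / ((s + 1).factorial : ℝ))
      = ∑ i ∈ range (s + 1), lagG m n X i (s - i) := by
  rw [Nat.add_choose_eq, Finset.Nat.sum_antidiagonal_eq_sum_range_succ
    (fun i j => m.choose i * n.choose j)]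
  push_cast
  rw [Finset.sum_mul]
  refine Finset.sum_congr rfl fun i hi => ?_
  rw [lagG]
  rw [Nat.add_sub_cancel' (Nat.lt_succ_iff.mp (Finset.mem_range.mp hi))]

theorem laguerre_convolution (m n : ℕ) (X : ℝ) (hX : 0 ≤ X) :
    ∫ t in (0 : ℝ)..X, laguerreFun m t * laguerreFun n (X - t) =
      laguerreFun (m + n) X - laguerreFun (m + n + 1) X := by
  rw [lag_step1 m n X hX, lag_step2 m n X]
  rw [Finset.sum_congr rfl fun s _ => lag_vandermonde m n X s]
  rw [Finset.sum_range_diag_flip (m + n + 1) (lagG m n X)]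
  symm
  calc (∑ j ∈ range (m + n + 1), ∑ k ∈ range (m + n + 1 - j), lagG m n X j k)
      = ∑ j ∈ range (m + 1), ∑ k ∈ range (m + n + 1 - j), lagG m n X j k := by
        refine (Finset.sum_subset (Finset.range_subset_range.mpr (by omega : m + 1 ≤ m + n + 1))
          fun j _ hj => ?_).symm
        have hjm : m < j := by simp only [Finset.mem_range, not_lt] at hj; omega
        exact Finset.sum_eq_zero fun k _ => lagG_left m n X k hjm
    _ = ∑ j ∈ range (m + 1), ∑ k ∈ range (n + 1), lagG m n X j k := by
        refine Finset.sum_congr rfl fun j hj => ?_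
        have hjm : j ≤ m := Nat.lt_succ_iff.mp (Finset.mem_range.mp hj)
        refine (Finset.sum_subset (Finset.range_subset_range.mpr (by omega : n + 1 ≤ m + n + 1 - j))
          fun k _ hk => ?_).symm
        exact lagG_right m n X j (by simp only [Finset.mem_range, not_lt] at hk; omega)
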